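/- The syntactic pomset automaton is finitely supported: for every spr-expression e, the support π_Σ(e) (the smallest ⪯_Σ-downward-closed set of ≃-classes containing e) is finite. In particular, every spr-expression is covered by a finite cover-closed set of expressions, where E covers e if e ≃ e₀ + ⋯ + e_{n-1} for some e₀,…,e_{n-1} ∈ E, and E is cover-closed if whenever f ∈ E and g ⪯_Σ f, E covers g. -/

import Mathlib

open Classical

noncomputable section

/-- Series-parallel rational expressions. -/
inductive SPR (A : Type) : Type where
  | zero : SPR A
  | one : SPR A
  | var (a : A) : SPR A
  | add (e f : SPR A) : SPR A
  | seq (e f : SPR A) : SPR A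
  | par (e f : SPR A) : SPR A
  | star (e : SPR A) : SPR A
  | dagger (e : SPR A) : SPR A

/-- The set ℱ of expressions accepting the empty pomset. -/
inductive Null {A : Type} : SPR A → Prop where
  | one : Null SPR.one
  | addL {e : SPR A} (f : SPR A) : Null e → Null (SPR.add e f)
  | addR {e : SPR A} (f : SPR A) : Null e → Null (SPR.add f e)
  | seq {e f : SPR A} : Null e → Null f → Null (SPR.seq e f)
  | par {e f : SPR A} : Null e → Null f → Null (SPR.par e f)
  | star (e : SPR A) : Null (SPR.star e)
  | dagger (e : SPR A) : Null (SPR.dagger e)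

/-- The syntactic congruence ≃: ACI of + and left-distributivity of + over ·. -/
inductive cong {A : Type} : SPR A → SPR A → Prop where
  | add_zero (e : SPR A) : cong (SPR.add e SPR.zero) e
  | add_idem (e : SPR A) : cong (SPR.add e e) e
  | add_comm (e f : SPR A) : cong (SPR.add e f) (SPR.add f e)
  | add_assoc (e f g : SPR A) : cong (SPR.add e (SPR.add f g)) (SPR.add (SPR.add e f) g)
  | distrib (e f g : SPR A) :
      cong (SPR.seq (SPR.add e f) g) (SPR.add (SPR.seq e g) (SPR.seq f g))
  | refl (e : SPR A) : cong e e
  | symm {e f : SPR A} : cong e f → cong f e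
  | trans {e f g : SPR A} : cong e f → cong f g → cong e g
  | add_congr {e e' f f' : SPR A} :
      cong e e' → cong f f' → cong (SPR.add e f) (SPR.add e' f')
  | seq_congr {e e' f f' : SPR A} :
      cong e e' → cong f f' → cong (SPR.seq e f) (SPR.seq e' f')
  | par_congr {e e' f f' : SPR A} :
      cong e e' → cong f f' → cong (SPR.par e f) (SPR.par e' f')
  | star_congr {e e' : SPR A} : cong e e' → cong (SPR.star e) (SPR.star e')
  | dagger_congr {e e' : SPR A} : cong e e' → cong (SPR.dagger e) (SPR.dagger e')

/-- `e ⋆ f`: `f` if `e` is nullable, `0` otherwise. -/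
def estar {A : Type} (e f : SPR A) : SPR A := if Null e then f else SPR.zero

/-- `e ⨟ f`: `0` if `e ≃ 0`, `e · f` otherwise. -/
def eseq {A : Type} (e f : SPR A) : SPR A :=
  if cong e SPR.zero then SPR.zero else SPR.seq e f

/-- The Brzozowski-style sequential derivative δ_Σ. -/
def dseq {A : Type} : SPR A → A → SPR A
  | SPR.zero, _ => SPR.zero
  | SPR.one, _ => SPR.zero
  | SPR.var b, a => if a = b then SPR.one else SPR.zero
  | SPR.add e f, a => SPR.add (dseq e a) (dseq f a)
  | SPR.seq e f, a => SPR.add (eseq (dseq e a) f) (estar e (dseq f a))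
  | SPR.par _ _, _ => SPR.zero
  | SPR.star e, a => eseq (dseq e a) (SPR.star e)
  | SPR.dagger _, _ => SPR.zero

/-- The Brzozowski-style parallel derivative γ_Σ. -/
def dgam {A : Type} : SPR A → SPR A → SPR A → SPR A
  | SPR.zero, _, _ => SPR.zero
  | SPR.one, _, _ => SPR.zero
  | SPR.var _, _, _ => SPR.zero
  | SPR.add e f, g, h => SPR.add (dgam e g h) (dgam f g h)
  | SPR.seq e f, g, h => SPR.add (eseq (dgam e g h) f) (estar e (dgam f g h))
  | SPR.par e f, g, h => if cong g e ∧ cong h f then SPR.one else SPR.zero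
  | SPR.star e, g, h => eseq (dgam e g h) (SPR.star e)
  | SPR.dagger e, g, h =>
      if cong g e ∧ cong h (SPR.dagger e) then SPR.one else SPR.zero

/-- The trace dependency preorder ⪯_Σ of the syntactic pomset automaton
(on raw expressions, compatible with the congruence ≃). -/
inductive dleq {A : Type} : SPR A → SPR A → Prop where
  | refl (e : SPR A) : dleq e e
  | trans {e f g : SPR A} : dleq e f → dleq f g → dleq e g
  | congr {e f : SPR A} : cong e f → dleq e f
  | delta (e : SPR A) (a : A) : dleq (dseq e a) e
  | gamma (e g h : SPR A) : dleq (dgam e g h) e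
  | forkL {e g h : SPR A} : ¬ cong (dgam e g h) SPR.zero → dleq g e
  | forkR {e g h : SPR A} : ¬ cong (dgam e g h) SPR.zero → dleq h e

/-- Maximal nesting of parallel composition in an expression. -/
def dpar {A : Type} : SPR A → ℕ
  | SPR.zero => 0
  | SPR.one => 0
  | SPR.var _ => 0
  | SPR.add e f => max (dpar e) (dpar f)
  | SPR.seq e f => max (dpar e) (dpar f)
  | SPR.par e f => max (dpar e) (dpar f) + 1
  | SPR.star e => dpar e
  | SPR.dagger e => dpar e

/-- Maximal nesting of the parallel star in an expression. -/
def ddag {A : Type} : SPR A → ℕ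
  | SPR.zero => 0
  | SPR.one => 0
  | SPR.var _ => 0
  | SPR.add e f => max (ddag e) (ddag f)
  | SPR.seq e f => max (ddag e) (ddag f)
  | SPR.par e f => max (ddag e) (ddag f)
  | SPR.star e => ddag e
  | SPR.dagger e => ddag e + 1

/-- Sum of a list of expressions. -/
def sumL {A : Type} (l : List (SPR A)) : SPR A := l.foldr SPR.add SPR.zero

/-- `E` covers `e` if `e` is congruent to a sum of elements of `E`. -/
def covers {A : Type} (E : Finset (SPR A)) (e : SPR A) : Prop :=
  ∃ l : List (SPR A), (∀ x ∈ l, x ∈ E) ∧ cong e (sumL l)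

/-- `E` is cover-closed if it covers everything below any of its members. -/
def coverClosed {A : Type} (E : Finset (SPR A)) : Prop :=
  ∀ f ∈ E, ∀ g : SPR A, dleq g f → covers E g
section FinSupp
variable {A : Type}

/-! ### Basic congruence helpers -/

lemma cong_zero_add (e : SPR A) : cong (SPR.add SPR.zero e) e :=
  (cong.add_comm _ _).trans (cong.add_zero e)

lemma cong_swap (a b c : SPR A) :
    cong (SPR.add a (SPR.add b c)) (SPR.add b (SPR.add a c)) :=
  (cong.add_assoc a b c).trans
    (((cong.add_congr (cong.add_comm a b) (cong.refl c))).trans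
      ((cong.add_assoc b a c).symm))

lemma cong_exch (a b c d : SPR A) :
    cong (SPR.add (SPR.add a b) (SPR.add c d))
      (SPR.add (SPR.add a c) (SPR.add b d)) :=
  ((cong.add_assoc a b (SPR.add c d)).symm).trans <|
    ((cong.add_congr (cong.refl a) (cong_swap b c d)).trans
      (cong.add_assoc a c (SPR.add b d)))

/-! ### Characterisation of expressions congruent to zero -/

def isZ : SPR A → Prop
  | SPR.zero => True
  | SPR.add e f => isZ e ∧ isZ f
  | _ => False

lemma cong_isZ {e f : SPR A} (h : cong e f) : isZ e ↔ isZ f := by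
  induction h <;> simp_all [isZ] <;> tauto

lemma isZ_cong {e : SPR A} (h : isZ e) : cong e SPR.zero := by
  induction e with
  | zero => exact cong.refl _
  | add e f ih1 ih2 =>
      exact (cong.add_congr (ih1 h.1) (ih2 h.2)).trans (cong.add_zero _)
  | _ => exact absurd h (by simp [isZ])

lemma cong_zero_iff {e : SPR A} : cong e SPR.zero ↔ isZ e :=
  ⟨fun h => (cong_isZ h).mpr trivial, isZ_cong⟩

lemma not_cong_add_zero {x y : SPR A} (h : ¬ cong x SPR.zero) :
    ¬ cong (SPR.add x y) SPR.zero := fun h' =>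
  h (cong_zero_iff.mpr ((cong_zero_iff.mp h').1))

lemma not_cong_add_zero' {x y : SPR A} (h : ¬ cong y SPR.zero) :
    ¬ cong (SPR.add x y) SPR.zero := fun h' =>
  h (cong_zero_iff.mpr ((cong_zero_iff.mp h').2))

/-! ### Nullability is invariant under congruence -/

@[simp] lemma null_zero : ¬ Null (SPR.zero : SPR A) := fun h => by cases h
@[simp] lemma null_one : Null (SPR.one : SPR A) := Null.one
@[simp] lemma null_var (a : A) : ¬ Null (SPR.var a) := fun h => by cases h
@[simp] lemma null_add_iff {e f : SPR A} :
    Null (SPR.add e f) ↔ Null e ∨ Null f := by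
  constructor
  · intro h; cases h with
    | addL _ h => exact Or.inl h
    | addR _ h => exact Or.inr h
  · rintro (h | h); exacts [Null.addL _ h, Null.addR _ h]
@[simp] lemma null_seq_iff {e f : SPR A} :
    Null (SPR.seq e f) ↔ Null e ∧ Null f := by
  constructor
  · intro h; cases h with | seq h1 h2 => exact ⟨h1, h2⟩
  · rintro ⟨h1, h2⟩; exact Null.seq h1 h2
@[simp] lemma null_par_iff {e f : SPR A} :
    Null (SPR.par e f) ↔ Null e ∧ Null f := by
  constructor
  · intro h; cases h with | par h1 h2 => exact ⟨h1, h2⟩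
  · rintro ⟨h1, h2⟩; exact Null.par h1 h2
@[simp] lemma null_star (e : SPR A) : Null (SPR.star e) := Null.star e
@[simp] lemma null_dagger (e : SPR A) : Null (SPR.dagger e) := Null.dagger e

lemma cong_null {e f : SPR A} (h : cong e f) : Null e ↔ Null f := by
  induction h <;> simp_all <;> tauto

end FinSupp
section FinSupp2
variable {A : Type}

lemma eseq_congr {e e' f f' : SPR A} (he : cong e e') (hf : cong f f') :
    cong (eseq e f) (eseq e' f') := by
  unfold eseq
  by_cases h : cong e SPR.zero
  · rw [if_pos h, if_pos (he.symm.trans h)]; exact cong.refl _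
  · rw [if_neg h, if_neg (fun h' => h (he.trans h'))]
    exact cong.seq_congr he hf

lemma estar_congr {e e' f f' : SPR A} (he : cong e e') (hf : cong f f') :
    cong (estar e f) (estar e' f') := by
  unfold estar
  by_cases h : Null e
  · rw [if_pos h, if_pos ((cong_null he).mp h)]; exact hf
  · rw [if_neg h, if_neg (fun h' => h ((cong_null he).mpr h'))]
    exact cong.refl _

lemma eseq_add (x y g : SPR A) :
    cong (eseq (SPR.add x y) g) (SPR.add (eseq x g) (eseq y g)) := by
  unfold eseq
  by_cases hx : cong x SPR.zero <;> by_cases hy : cong y SPR.zero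
  · rw [if_pos ((cong.add_congr hx hy).trans (cong.add_zero _)),
      if_pos hx, if_pos hy]
    exact (cong.add_zero _).symm
  · rw [if_neg (not_cong_add_zero' hy), if_pos hx, if_neg hy]
    exact (cong.seq_congr ((cong.add_congr hx (cong.refl y)).trans
      (cong_zero_add y)) (cong.refl g)).trans (cong_zero_add _).symm
  · rw [if_neg (not_cong_add_zero hx), if_neg hx, if_pos hy]
    exact (cong.seq_congr ((cong.add_congr (cong.refl x) hy).trans
      (cong.add_zero x)) (cong.refl g)).trans (cong.add_zero _).symm
  · rw [if_neg (not_cong_add_zero hx), if_neg hx, if_neg hy]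
    exact cong.distrib x y g

lemma estar_add (e f d : SPR A) :
    cong (estar (SPR.add e f) d) (SPR.add (estar e d) (estar f d)) := by
  unfold estar
  by_cases he : Null e <;> by_cases hf : Null f <;>
    simp [he, hf, null_add_iff]
  · exact (cong.add_idem d).symm
  · exact (cong.add_zero d).symm
  · exact (cong_zero_add d).symm
  · exact (cong.add_zero _).symm

lemma dseq_congr {e f : SPR A} (h : cong e f) (a : A) :
    cong (dseq e a) (dseq f a) := by
  induction h with
  | add_zero e => exact cong.add_zero _
  | add_idem e => exact cong.add_idem _
  | add_comm e f => exact cong.add_comm _ _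
  | add_assoc e f g => exact cong.add_assoc _ _ _
  | distrib e f g =>
      exact (cong.add_congr (eseq_add _ _ _) (estar_add _ _ _)).trans
        (cong_exch _ _ _ _)
  | refl e => exact cong.refl _
  | symm _ ih => exact ih.symm
  | trans _ _ ih1 ih2 => exact ih1.trans ih2
  | add_congr _ _ ih1 ih2 => exact cong.add_congr ih1 ih2
  | seq_congr h1 h2 ih1 ih2 =>
      exact cong.add_congr (eseq_congr ih1 h2) (estar_congr h1 ih2)
  | par_congr _ _ _ _ => exact cong.refl _
  | star_congr h ih => exact eseq_congr ih (cong.star_congr h)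
  | dagger_congr _ _ => exact cong.refl _

lemma dgam_congr {e f : SPR A} (h : cong e f) (g k : SPR A) :
    cong (dgam e g k) (dgam f g k) := by
  induction h with
  | add_zero e => exact cong.add_zero _
  | add_idem e => exact cong.add_idem _
  | add_comm e f => exact cong.add_comm _ _
  | add_assoc e f g => exact cong.add_assoc _ _ _
  | distrib e f g =>
      exact (cong.add_congr (eseq_add _ _ _) (estar_add _ _ _)).trans
        (cong_exch _ _ _ _)
  | refl e => exact cong.refl _
  | symm _ ih => exact ih.symm
  | trans _ _ ih1 ih2 => exact ih1.trans ih2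
  | add_congr _ _ ih1 ih2 => exact cong.add_congr ih1 ih2
  | seq_congr h1 h2 ih1 ih2 =>
      exact cong.add_congr (eseq_congr ih1 h2) (estar_congr h1 ih2)
  | par_congr h1 h2 ih1 ih2 =>
      rename_i e e' f f'
      simp only [dgam]
      by_cases hc : cong g e ∧ cong k f
      · rw [if_pos hc, if_pos ⟨hc.1.trans h1, hc.2.trans h2⟩]
        exact cong.refl _
      · rw [if_neg hc, if_neg (fun hc' => hc
          ⟨hc'.1.trans h1.symm, hc'.2.trans h2.symm⟩)]
        exact cong.refl _
  | star_congr h ih => exact eseq_congr ih (cong.star_congr h)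
  | dagger_congr h ih =>
      rename_i e e'
      simp only [dgam]
      by_cases hc : cong g e ∧ cong k (SPR.dagger e)
      · rw [if_pos hc, if_pos ⟨hc.1.trans h, hc.2.trans (cong.dagger_congr h)⟩]
        exact cong.refl _
      · rw [if_neg hc, if_neg (fun hc' => hc ⟨hc'.1.trans h.symm,
          hc'.2.trans (cong.dagger_congr h.symm)⟩)]
        exact cong.refl _

end FinSupp2
section FinSupp3
variable {A : Type}

@[simp] lemma sumL_nil : sumL ([] : List (SPR A)) = SPR.zero := rfl
@[simp] lemma sumL_cons (x : SPR A) (l : List (SPR A)) :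
    sumL (x :: l) = SPR.add x (sumL l) := rfl

lemma sumL_append (l1 l2 : List (SPR A)) :
    cong (sumL (l1 ++ l2)) (SPR.add (sumL l1) (sumL l2)) := by
  induction l1 with
  | nil => exact (cong_zero_add _).symm
  | cons x l ih =>
      exact (cong.add_congr (cong.refl x) ih).trans (cong.add_assoc _ _ _)

lemma sumL_zero_iff (l : List (SPR A)) :
    cong (sumL l) SPR.zero ↔ ∀ x ∈ l, cong x SPR.zero := by
  induction l with
  | nil => simp [cong.refl]
  | cons x l ih =>
      simp only [sumL_cons, List.mem_cons, cong_zero_iff] at *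
      constructor
      · rintro ⟨h1, h2⟩ y (rfl | hy)
        · exact h1
        · exact ih.mp h2 y hy
      · intro h; exact ⟨h x (Or.inl rfl), ih.mpr fun y hy => h y (Or.inr hy)⟩

lemma dseq_sumL (l : List (SPR A)) (a : A) :
    dseq (sumL l) a = sumL (l.map (dseq · a)) := by
  induction l with
  | nil => rfl
  | cons x l ih =>
      simp only [sumL_cons, List.map_cons, dseq]
      exact congrArg _ ih

lemma dgam_sumL (l : List (SPR A)) (g h : SPR A) :
    dgam (sumL l) g h = sumL (l.map (dgam · g h)) := by
  induction l with
  | nil => rfl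
  | cons x l ih =>
      simp only [sumL_cons, List.map_cons, dgam]
      exact congrArg _ ih

/-- List-level covering. -/
def coversL (E : List (SPR A)) (e : SPR A) : Prop :=
  ∃ l : List (SPR A), (∀ x ∈ l, x ∈ E) ∧ cong e (sumL l)

lemma coversL_congr {E : List (SPR A)} {e f : SPR A} (h : cong e f)
    (hf : coversL E f) : coversL E e := by
  obtain ⟨l, hl, hc⟩ := hf; exact ⟨l, hl, h.trans hc⟩

lemma coversL_mono {E E' : List (SPR A)} (h : ∀ x ∈ E, x ∈ E')
    {e : SPR A} (he : coversL E e) : coversL E' e := by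
  obtain ⟨l, hl, hc⟩ := he; exact ⟨l, fun x hx => h x (hl x hx), hc⟩

lemma coversL_zero (E : List (SPR A)) : coversL E SPR.zero :=
  ⟨[], by simp, cong.refl _⟩

lemma coversL_mem {E : List (SPR A)} {e : SPR A} (h : e ∈ E) : coversL E e :=
  ⟨[e], by simpa using h, (cong.add_zero e).symm⟩

lemma coversL_add {E : List (SPR A)} {x y : SPR A} (hx : coversL E x)
    (hy : coversL E y) : coversL E (SPR.add x y) := by
  obtain ⟨l1, hl1, hc1⟩ := hx; obtain ⟨l2, hl2, hc2⟩ := hy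
  refine ⟨l1 ++ l2, ?_, (cong.add_congr hc1 hc2).trans (sumL_append l1 l2).symm⟩
  intro z hz; rcases List.mem_append.mp hz with h | h
  exacts [hl1 z h, hl2 z h]

lemma coversL_sumL {E : List (SPR A)} {l : List (SPR A)}
    (h : ∀ x ∈ l, coversL E x) : coversL E (sumL l) := by
  induction l with
  | nil => exact coversL_zero E
  | cons x l ih =>
      exact coversL_add (h x (by simp))
        (ih fun y hy => h y (List.mem_cons_of_mem _ hy))

lemma eseq_sumL (l : List (SPR A)) (f : SPR A) :
    ∃ l' : List (SPR A), (∀ y ∈ l', ∃ x ∈ l, y = SPR.seq x f) ∧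
      cong (eseq (sumL l) f) (sumL l') := by
  induction l with
  | nil =>
      refine ⟨[], by simp, ?_⟩
      simp only [sumL_nil, eseq, if_pos (cong.refl (SPR.zero : SPR A))]
      show cong (eseq SPR.zero f) SPR.zero
      unfold eseq; rw [if_pos (cong.refl _)]
      exact cong.refl _
  | cons x l ih =>
      by_cases hx : cong x SPR.zero
      · obtain ⟨l', hl', hc⟩ := ih
        refine ⟨l', fun y hy => ?_, ?_⟩
        · obtain ⟨z, hz, rfl⟩ := hl' y hy
          exact ⟨z, List.mem_cons_of_mem _ hz, rfl⟩
        · refine (eseq_congr ((cong.add_congr hx (cong.refl _)).trans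
            (cong_zero_add _)) (cong.refl f)).trans hc
      · have hxy : ¬ cong (sumL (x :: l)) SPR.zero := not_cong_add_zero hx
        have heq : eseq (sumL (x :: l)) f = SPR.seq (sumL (x :: l)) f :=
          if_neg hxy
        by_cases hl0 : cong (sumL l) SPR.zero
        · refine ⟨[SPR.seq x f], by simp, ?_⟩
          rw [heq]
          exact (cong.seq_congr ((cong.add_congr (cong.refl x) hl0).trans
            (cong.add_zero x)) (cong.refl f)).trans (cong.add_zero _).symm
        · obtain ⟨l', hl', hc⟩ := ih
          refine ⟨SPR.seq x f :: l', ?_, ?_⟩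
          · intro y hy
            rcases List.mem_cons.mp hy with rfl | hy
            · exact ⟨x, by simp, rfl⟩
            · obtain ⟨z, hz, rfl⟩ := hl' y hy
              exact ⟨z, List.mem_cons_of_mem _ hz, rfl⟩
          · rw [heq]
            have h2 : SPR.seq (sumL l) f = eseq (sumL l) f := (if_neg hl0).symm
            refine (cong.distrib x (sumL l) f).trans ?_
            rw [sumL_cons]
            exact cong.add_congr (cong.refl _) (h2 ▸ hc)

lemma coversL_eseq {E : List (SPR A)} {d : SPR A} (f : SPR A)
    (h : coversL E d) : coversL (E.map (fun x => SPR.seq x f)) (eseq d f) := by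
  obtain ⟨l, hl, hc⟩ := h
  obtain ⟨l', hl', hc'⟩ := eseq_sumL l f
  refine ⟨l', fun y hy => ?_, (eseq_congr hc (cong.refl f)).trans hc'⟩
  obtain ⟨x, hx, rfl⟩ := hl' y hy
  exact List.mem_map.mpr ⟨x, hl x hx, rfl⟩

lemma coversL_estar {E : List (SPR A)} (u : SPR A) {d : SPR A}
    (h : coversL E d) : coversL E (estar u d) := by
  unfold estar; split
  · exact h
  · exact coversL_zero E

end FinSupp3
section FinSupp4
variable {A : Type}

/-- Antimirov-style closure terms. -/
def PD : SPR A → List (SPR A)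
  | SPR.zero => []
  | SPR.one => []
  | SPR.var _ => [SPR.one]
  | SPR.add e f => PD e ++ PD f
  | SPR.seq e f => (PD e).map (fun t => SPR.seq t f) ++ PD f
  | SPR.par _ _ => [SPR.one]
  | SPR.star e => (PD e).map (fun t => SPR.seq t (SPR.star e))
  | SPR.dagger _ => [SPR.one]

/-- Abstract one-step derivative closure: any operation with the sequential
recursion shape stays within `PD`. -/
lemma PD_closure (D : SPR A → SPR A)
    (h0 : D SPR.zero = SPR.zero) (h1 : D SPR.one = SPR.zero)
    (hadd : ∀ e f, D (SPR.add e f) = SPR.add (D e) (D f))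
    (hseq : ∀ e f, D (SPR.seq e f) = SPR.add (eseq (D e) f) (estar e (D f)))
    (hstar : ∀ e, D (SPR.star e) = eseq (D e) (SPR.star e))
    (hvar : ∀ b, coversL [SPR.one] (D (SPR.var b)))
    (hpar : ∀ e f, coversL [SPR.one] (D (SPR.par e f)))
    (hdag : ∀ e, coversL [SPR.one] (D (SPR.dagger e))) :
    ∀ e : SPR A, coversL (PD e) (D e) ∧ ∀ t ∈ PD e, coversL (PD e) (D t) := by
  intro e
  induction e with
  | zero => exact ⟨by rw [h0]; exact coversL_zero _, by simp [PD]⟩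
  | one => exact ⟨by rw [h1]; exact coversL_zero _, by simp [PD]⟩
  | var b =>
      refine ⟨hvar b, ?_⟩
      intro t ht
      simp only [PD, List.mem_singleton] at ht
      subst ht
      rw [h1]; exact coversL_zero _
  | add e f ihe ihf =>
      have me : ∀ x ∈ PD e, x ∈ PD (SPR.add e f) := by
        intro x hx; simp [PD, hx]
      have mf : ∀ x ∈ PD f, x ∈ PD (SPR.add e f) := by
        intro x hx; simp [PD, hx]
      refine ⟨?_, ?_⟩
      · rw [hadd]
        exact coversL_add (coversL_mono me ihe.1) (coversL_mono mf ihf.1)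
      · intro t ht
        rcases List.mem_append.mp ht with h | h
        · exact coversL_mono me (ihe.2 t h)
        · exact coversL_mono mf (ihf.2 t h)
  | seq e f ihe ihf =>
      have me : ∀ x ∈ (PD e).map (fun t => SPR.seq t f),
          x ∈ PD (SPR.seq e f) := by
        intro x hx; simp only [PD]; exact List.mem_append.mpr (Or.inl hx)
      have mf : ∀ x ∈ PD f, x ∈ PD (SPR.seq e f) := by
        intro x hx; simp only [PD]; exact List.mem_append.mpr (Or.inr hx)
      have covf : ∀ d : SPR A, coversL (PD f) d → coversL (PD (SPR.seq e f)) d :=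
        fun d h => coversL_mono mf h
      have cove : ∀ d : SPR A, coversL (PD e) d →
          coversL (PD (SPR.seq e f)) (eseq d f) :=
        fun d h => coversL_mono me (coversL_eseq f h)
      refine ⟨?_, ?_⟩
      · rw [hseq]
        exact coversL_add (cove _ ihe.1) (coversL_estar e (covf _ ihf.1))
      · intro t ht
        rcases List.mem_append.mp ht with h | h
        · obtain ⟨u, hu, rfl⟩ := List.mem_map.mp h
          rw [hseq]
          exact coversL_add (cove _ (ihe.2 u hu))
            (coversL_estar u (covf _ ihf.1))
        · exact covf _ (ihf.2 t h)
  | par e f ihe ihf =>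
      refine ⟨coversL_mono (by simp [PD]) (hpar e f), ?_⟩
      intro t ht
      simp only [PD, List.mem_singleton] at ht
      subst ht
      rw [h1]; exact coversL_zero _
  | star e ihe =>
      have cove : ∀ d : SPR A, coversL (PD e) d →
          coversL (PD (SPR.star e)) (eseq d (SPR.star e)) :=
        fun d h => coversL_eseq (SPR.star e) h
      have cstar : coversL (PD (SPR.star e)) (D (SPR.star e)) := by
        rw [hstar]; exact cove _ ihe.1
      refine ⟨cstar, ?_⟩
      intro t ht
      obtain ⟨u, hu, rfl⟩ := List.mem_map.mp ht
      rw [hseq]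
      exact coversL_add (cove _ (ihe.2 u hu)) (coversL_estar u cstar)
  | dagger e ihe =>
      refine ⟨coversL_mono (by simp [PD]) (hdag e), ?_⟩
      intro t ht
      simp only [PD, List.mem_singleton] at ht
      subst ht
      rw [h1]; exact coversL_zero _

lemma PD_dseq (e : SPR A) (a : A) :
    coversL (PD e) (dseq e a) ∧ ∀ t ∈ PD e, coversL (PD e) (dseq t a) :=
  PD_closure (fun x => dseq x a) rfl rfl (fun _ _ => rfl) (fun _ _ => rfl)
    (fun _ => rfl)
    (fun b => by
      by_cases h : a = b
      · exact coversL_mem (by simp [dseq, h])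
      · refine coversL_congr ?_ (coversL_zero _)
        simp [dseq, h]; exact cong.refl _)
    (fun _ _ => coversL_zero _) (fun _ => coversL_zero _) e

lemma PD_dgam (e : SPR A) (g h : SPR A) :
    coversL (PD e) (dgam e g h) ∧ ∀ t ∈ PD e, coversL (PD e) (dgam t g h) :=
  PD_closure (fun x => dgam x g h) rfl rfl (fun _ _ => rfl) (fun _ _ => rfl)
    (fun _ => rfl)
    (fun b => coversL_zero _)
    (fun e' f' => by
      simp only [dgam]; split
      · exact coversL_mem (by simp)
      · exact coversL_zero _)
    (fun e' => by
      simp only [dgam]; split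
      · exact coversL_mem (by simp)
      · exact coversL_zero _) e

end FinSupp4
section FinSupp5
variable {A : Type}

/-- Possible fork argument pairs. -/
def FL : SPR A → List (SPR A × SPR A)
  | SPR.zero => []
  | SPR.one => []
  | SPR.var _ => []
  | SPR.add e f => FL e ++ FL f
  | SPR.seq e f => FL e ++ FL f
  | SPR.par e f => FL e ++ FL f ++ [(e, f)]
  | SPR.star e => FL e
  | SPR.dagger e => FL e ++ [(e, SPR.dagger e)]

/-- Structural subterms. -/
def subs : SPR A → List (SPR A)
  | SPR.zero => [SPR.zero]
  | SPR.one => [SPR.one]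
  | SPR.var a => [SPR.var a]
  | SPR.add e f => SPR.add e f :: (subs e ++ subs f)
  | SPR.seq e f => SPR.seq e f :: (subs e ++ subs f)
  | SPR.par e f => SPR.par e f :: (subs e ++ subs f)
  | SPR.star e => SPR.star e :: subs e
  | SPR.dagger e => SPR.dagger e :: subs e

lemma mem_subs_self (e : SPR A) : e ∈ subs e := by
  cases e <;> simp [subs]

lemma subs_trans : ∀ e s : SPR A, s ∈ subs e → ∀ x ∈ subs s, x ∈ subs e := by
  intro e
  induction e with
  | zero => intro s hs; simp [subs] at hs; subst hs; simp [subs]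
  | one => intro s hs; simp [subs] at hs; subst hs; simp [subs]
  | var a => intro s hs; simp [subs] at hs; subst hs; simp [subs]
  | add e f ihe ihf =>
      intro s hs x hx
      rcases List.mem_cons.mp hs with rfl | hs
      · exact hx
      · rcases List.mem_append.mp hs with h | h
        · exact List.mem_cons_of_mem _ (List.mem_append.mpr (Or.inl (ihe s h x hx)))
        · exact List.mem_cons_of_mem _ (List.mem_append.mpr (Or.inr (ihf s h x hx)))
  | seq e f ihe ihf =>
      intro s hs x hx
      rcases List.mem_cons.mp hs with rfl | hs
      · exact hx
      · rcases List.mem_append.mp hs with h | h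
        · exact List.mem_cons_of_mem _ (List.mem_append.mpr (Or.inl (ihe s h x hx)))
        · exact List.mem_cons_of_mem _ (List.mem_append.mpr (Or.inr (ihf s h x hx)))
  | par e f ihe ihf =>
      intro s hs x hx
      rcases List.mem_cons.mp hs with rfl | hs
      · exact hx
      · rcases List.mem_append.mp hs with h | h
        · exact List.mem_cons_of_mem _ (List.mem_append.mpr (Or.inl (ihe s h x hx)))
        · exact List.mem_cons_of_mem _ (List.mem_append.mpr (Or.inr (ihf s h x hx)))
  | star e ihe =>
      intro s hs x hx
      rcases List.mem_cons.mp hs with rfl | hs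
      · exact hx
      · exact List.mem_cons_of_mem _ (ihe s hs x hx)
  | dagger e ihe =>
      intro s hs x hx
      rcases List.mem_cons.mp hs with rfl | hs
      · exact hx
      · exact List.mem_cons_of_mem _ (ihe s hs x hx)

lemma FL_subs : ∀ e : SPR A, ∀ p ∈ FL e, p.1 ∈ subs e ∧ p.2 ∈ subs e := by
  intro e
  induction e with
  | zero => simp [FL]
  | one => simp [FL]
  | var a => simp [FL]
  | add e f ihe ihf =>
      intro p hp
      rcases List.mem_append.mp hp with h | h
      · exact ⟨List.mem_cons_of_mem _ (List.mem_append.mpr (Or.inl (ihe p h).1)),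
          List.mem_cons_of_mem _ (List.mem_append.mpr (Or.inl (ihe p h).2))⟩
      · exact ⟨List.mem_cons_of_mem _ (List.mem_append.mpr (Or.inr (ihf p h).1)),
          List.mem_cons_of_mem _ (List.mem_append.mpr (Or.inr (ihf p h).2))⟩
  | seq e f ihe ihf =>
      intro p hp
      rcases List.mem_append.mp hp with h | h
      · exact ⟨List.mem_cons_of_mem _ (List.mem_append.mpr (Or.inl (ihe p h).1)),
          List.mem_cons_of_mem _ (List.mem_append.mpr (Or.inl (ihe p h).2))⟩
      · exact ⟨List.mem_cons_of_mem _ (List.mem_append.mpr (Or.inr (ihf p h).1)),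
          List.mem_cons_of_mem _ (List.mem_append.mpr (Or.inr (ihf p h).2))⟩
  | par e f ihe ihf =>
      intro p hp
      simp only [FL, List.append_assoc, List.mem_append, List.mem_singleton] at hp
      rcases hp with h | h | h
      · exact ⟨List.mem_cons_of_mem _ (List.mem_append.mpr (Or.inl (ihe p h).1)),
          List.mem_cons_of_mem _ (List.mem_append.mpr (Or.inl (ihe p h).2))⟩
      · exact ⟨List.mem_cons_of_mem _ (List.mem_append.mpr (Or.inr (ihf p h).1)),
          List.mem_cons_of_mem _ (List.mem_append.mpr (Or.inr (ihf p h).2))⟩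
      · subst h
        exact ⟨List.mem_cons_of_mem _ (List.mem_append.mpr (Or.inl (mem_subs_self e))),
          List.mem_cons_of_mem _ (List.mem_append.mpr (Or.inr (mem_subs_self f)))⟩
  | star e ihe =>
      intro p hp
      exact ⟨List.mem_cons_of_mem _ (ihe p hp).1,
        List.mem_cons_of_mem _ (ihe p hp).2⟩
  | dagger e ihe =>
      intro p hp
      rcases List.mem_append.mp hp with h | h
      · exact ⟨List.mem_cons_of_mem _ (ihe p h).1,
          List.mem_cons_of_mem _ (ihe p h).2⟩
      · simp only [List.mem_singleton] at h
        subst h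
        exact ⟨List.mem_cons_of_mem _ (mem_subs_self e), by simp [subs]⟩

lemma FL_PD : ∀ e : SPR A, ∀ t ∈ PD e, ∀ p ∈ FL t, p ∈ FL e := by
  intro e
  induction e with
  | zero => simp [PD]
  | one => simp [PD]
  | var a => intro t ht; simp only [PD, List.mem_singleton] at ht; subst ht; simp [FL]
  | add e f ihe ihf =>
      intro t ht p hp
      rcases List.mem_append.mp ht with h | h
      · exact List.mem_append.mpr (Or.inl (ihe t h p hp))
      · exact List.mem_append.mpr (Or.inr (ihf t h p hp))
  | seq e f ihe ihf =>
      intro t ht p hp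
      rcases List.mem_append.mp ht with h | h
      · obtain ⟨u, hu, rfl⟩ := List.mem_map.mp h
        rcases List.mem_append.mp hp with h' | h'
        · exact List.mem_append.mpr (Or.inl (ihe u hu p h'))
        · exact List.mem_append.mpr (Or.inr h')
      · exact List.mem_append.mpr (Or.inr (ihf t h p hp))
  | par e f ihe ihf =>
      intro t ht
      simp only [PD, List.mem_singleton] at ht; subst ht; simp [FL]
  | star e ihe =>
      intro t ht p hp
      obtain ⟨u, hu, rfl⟩ := List.mem_map.mp ht
      rcases List.mem_append.mp hp with h' | h'
      · exact ihe u hu p h'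
      · exact h'
  | dagger e ihe =>
      intro t ht
      simp only [PD, List.mem_singleton] at ht; subst ht; simp [FL]

lemma not_cong_eseq {d f : SPR A} (h : ¬ cong (eseq d f) SPR.zero) :
    ¬ cong d SPR.zero := by
  intro hd
  apply h
  unfold eseq; rw [if_pos hd]; exact cong.refl _

lemma not_cong_estar {e d : SPR A} (h : ¬ cong (estar e d) SPR.zero) :
    ¬ cong d SPR.zero := by
  intro hd
  apply h
  unfold estar; split
  · exact hd
  · exact cong.refl _

lemma not_cong_add {x y : SPR A} (h : ¬ cong (SPR.add x y) SPR.zero) :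
    ¬ cong x SPR.zero ∨ ¬ cong y SPR.zero := by
  by_contra hc
  push_neg at hc
  exact h ((cong.add_congr hc.1 hc.2).trans (cong.add_zero _))

lemma dgam_fork : ∀ e g h : SPR A, ¬ cong (dgam e g h) SPR.zero →
    ∃ p ∈ FL e, cong g p.1 ∧ cong h p.2 := by
  intro e
  induction e with
  | zero => intro g h hc; exact absurd (cong.refl _) hc
  | one => intro g h hc; exact absurd (cong.refl _) hc
  | var a => intro g h hc; exact absurd (cong.refl _) hc
  | add e f ihe ihf =>
      intro g h hc
      rcases not_cong_add hc with h' | h'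
      · obtain ⟨p, hp, hgp⟩ := ihe g h h'
        exact ⟨p, List.mem_append.mpr (Or.inl hp), hgp⟩
      · obtain ⟨p, hp, hgp⟩ := ihf g h h'
        exact ⟨p, List.mem_append.mpr (Or.inr hp), hgp⟩
  | seq e f ihe ihf =>
      intro g h hc
      rcases not_cong_add hc with h' | h'
      · obtain ⟨p, hp, hgp⟩ := ihe g h (not_cong_eseq h')
        exact ⟨p, List.mem_append.mpr (Or.inl hp), hgp⟩
      · obtain ⟨p, hp, hgp⟩ := ihf g h (not_cong_estar h')
        exact ⟨p, List.mem_append.mpr (Or.inr hp), hgp⟩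
  | par e f ihe ihf =>
      intro g h hc
      simp only [dgam] at hc
      by_cases hcond : cong g e ∧ cong h f
      · refine ⟨(e, f), ?_, hcond.1, hcond.2⟩
        simp [FL]
      · rw [if_neg hcond] at hc
        exact absurd (cong.refl _) hc
  | star e ihe =>
      intro g h hc
      exact ihe g h (not_cong_eseq hc)
  | dagger e ihe =>
      intro g h hc
      simp only [dgam] at hc
      by_cases hcond : cong g e ∧ cong h (SPR.dagger e)
      · refine ⟨(e, SPR.dagger e), ?_, hcond.1, hcond.2⟩
        simp [FL]
      · rw [if_neg hcond] at hc
        exact absurd (cong.refl _) hc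

end FinSupp5
section FinSupp6
variable {A : Type}

/-- The closure list of an expression. -/
def EL (e : SPR A) : List (SPR A) := (subs e).flatMap (fun s => s :: PD s)

lemma mem_EL {e x : SPR A} :
    x ∈ EL e ↔ ∃ s ∈ subs e, x = s ∨ x ∈ PD s := by
  simp only [EL, List.mem_flatMap, List.mem_cons]

lemma subs_mem_EL {e s : SPR A} (h : s ∈ subs e) : s ∈ EL e :=
  mem_EL.mpr ⟨s, h, Or.inl rfl⟩

lemma PD_sub_EL {e s : SPR A} (h : s ∈ subs e) : ∀ x ∈ PD s, x ∈ EL e :=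
  fun x hx => mem_EL.mpr ⟨s, h, Or.inr hx⟩

lemma EL_dseq {e x : SPR A} (hx : x ∈ EL e) (a : A) :
    coversL (EL e) (dseq x a) := by
  obtain ⟨s, hs, hcase⟩ := mem_EL.mp hx
  rcases hcase with rfl | hxs
  · exact coversL_mono (PD_sub_EL hs) (PD_dseq x a).1
  · exact coversL_mono (PD_sub_EL hs) ((PD_dseq s a).2 x hxs)

lemma EL_dgam {e x : SPR A} (hx : x ∈ EL e) (g h : SPR A) :
    coversL (EL e) (dgam x g h) := by
  obtain ⟨s, hs, hcase⟩ := mem_EL.mp hx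
  rcases hcase with rfl | hxs
  · exact coversL_mono (PD_sub_EL hs) (PD_dgam x g h).1
  · exact coversL_mono (PD_sub_EL hs) ((PD_dgam s g h).2 x hxs)

lemma EL_fork {e x g h : SPR A} (hx : x ∈ EL e)
    (hc : ¬ cong (dgam x g h) SPR.zero) :
    ∃ p : SPR A × SPR A, p.1 ∈ EL e ∧ p.2 ∈ EL e ∧ cong g p.1 ∧ cong h p.2 := by
  obtain ⟨s, hs, hcase⟩ := mem_EL.mp hx
  obtain ⟨p, hp, hg, hh⟩ := dgam_fork x g h hc
  have hps : p ∈ FL s := by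
    rcases hcase with rfl | hxs
    · exact hp
    · exact FL_PD s x hxs p hp
  obtain ⟨h1, h2⟩ := FL_subs s p hps
  exact ⟨p, subs_mem_EL (subs_trans e s hs _ h1),
    subs_mem_EL (subs_trans e s hs _ h2), hg, hh⟩

/-- Covering is preserved downwards along the trace dependency preorder. -/
lemma dleq_coversL (e : SPR A) :
    ∀ {g f : SPR A}, dleq g f → coversL (EL e) f → coversL (EL e) g := by
  intro g f h
  induction h with
  | refl _ => exact id
  | trans h1 h2 ih1 ih2 => exact fun hc => ih1 (ih2 hc)
  | congr h => exact fun hc => coversL_congr h hc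
  | delta f a =>
      rintro ⟨l, hl, hc⟩
      have h1 : cong (dseq f a) (sumL (l.map (fun x => dseq x a))) := by
        have := dseq_congr hc a
        rwa [dseq_sumL] at this
      refine coversL_congr h1 (coversL_sumL ?_)
      intro x hx
      obtain ⟨y, hy, rfl⟩ := List.mem_map.mp hx
      exact EL_dseq (hl y hy) a
  | gamma f g' h' =>
      rintro ⟨l, hl, hc⟩
      have h1 : cong (dgam f g' h') (sumL (l.map (fun x => dgam x g' h'))) := by
        have := dgam_congr hc g' h'
        rwa [dgam_sumL] at this
      refine coversL_congr h1 (coversL_sumL ?_)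
      intro x hx
      obtain ⟨y, hy, rfl⟩ := List.mem_map.mp hx
      exact EL_dgam (hl y hy) g' h'
  | @forkL f g' h' hnz =>
      rintro ⟨l, hl, hc⟩
      have hnz2 : ¬ cong (sumL (l.map (fun x => dgam x g' h'))) SPR.zero := by
        intro h0
        refine hnz (cong.trans ?_ h0)
        have := dgam_congr hc g' h'
        rwa [dgam_sumL] at this
      have : ∃ x ∈ l, ¬ cong (dgam x g' h') SPR.zero := by
        by_contra hall
        push_neg at hall
        exact hnz2 ((sumL_zero_iff _).mpr (by
          intro y hy
          obtain ⟨x, hx, rfl⟩ := List.mem_map.mp hy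
          exact hall x hx))
      obtain ⟨x, hx, hnzx⟩ := this
      obtain ⟨p, hp1, _, hg, _⟩ := EL_fork (hl x hx) hnzx
      exact coversL_congr hg (coversL_mem hp1)
  | @forkR f g' h' hnz =>
      rintro ⟨l, hl, hc⟩
      have hnz2 : ¬ cong (sumL (l.map (fun x => dgam x g' h'))) SPR.zero := by
        intro h0
        refine hnz (cong.trans ?_ h0)
        have := dgam_congr hc g' h'
        rwa [dgam_sumL] at this
      have : ∃ x ∈ l, ¬ cong (dgam x g' h') SPR.zero := by
        by_contra hall
        push_neg at hall
        exact hnz2 ((sumL_zero_iff _).mpr (by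
          intro y hy
          obtain ⟨x, hx, rfl⟩ := List.mem_map.mp hy
          exact hall x hx))
      obtain ⟨x, hx, hnzx⟩ := this
      obtain ⟨p, _, hp2, _, hh⟩ := EL_fork (hl x hx) hnzx
      exact coversL_congr hh (coversL_mem hp2)

/-! ### Sums over lists with the same underlying set are congruent -/

lemma add_mem_absorb {x : SPR A} : ∀ {l : List (SPR A)}, x ∈ l →
    cong (SPR.add x (sumL l)) (sumL l) := by
  intro l
  induction l with
  | nil => intro h; cases h
  | cons y l ih =>
      intro h
      rcases List.mem_cons.mp h with rfl | h
      · exact (cong.add_assoc x x (sumL l)).trans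
          (cong.add_congr (cong.add_idem x) (cong.refl _))
      · exact (cong_swap x y (sumL l)).trans
          (cong.add_congr (cong.refl y) (ih h))

lemma sum_subset : ∀ {l l' : List (SPR A)}, (∀ x ∈ l, x ∈ l') →
    cong (SPR.add (sumL l) (sumL l')) (sumL l') := by
  intro l
  induction l with
  | nil => intro l' _; exact cong_zero_add _
  | cons x l ih =>
      intro l' h
      refine ((cong.add_assoc x (sumL l) (sumL l')).symm.trans ?_)
      refine (cong.add_congr (cong.refl x) (ih fun y hy =>
        h y (List.mem_cons_of_mem _ hy))).trans ?_
      exact add_mem_absorb (h x (by simp))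

lemma sum_set_congr {l l' : List (SPR A)} (h1 : ∀ x ∈ l, x ∈ l')
    (h2 : ∀ x ∈ l', x ∈ l) : cong (sumL l) (sumL l') :=
  ((sum_subset h2).symm.trans (cong.add_comm _ _)).trans (sum_subset h1)

end FinSupp6
/-- The syntactic pomset automaton is finitely supported: the support of every
expression is finite up to congruence, and every expression is covered by a
finite cover-closed set. -/
theorem syntactic_finitely_supported {A : Type} (e : SPR A) :
    (∃ D : Finset (SPR A), ∀ f : SPR A, dleq f e → ∃ f' ∈ D, cong f f') ∧
    (∃ E : Finset (SPR A), covers E e ∧ coverClosed E) := by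
  haveI : DecidableEq (SPR A) := Classical.decEq _
  have hee : coversL (EL e) e := coversL_mem (subs_mem_EL (mem_subs_self e))
  constructor
  · refine ⟨(((EL e).dedup.sublists).map sumL).toFinset, ?_⟩
    intro f hf
    obtain ⟨l, hl, hc⟩ := dleq_coversL e hf hee
    refine ⟨sumL ((EL e).dedup.filter (fun x => x ∈ l)), ?_, ?_⟩
    · simp only [List.mem_toFinset, List.mem_map]
      exact ⟨_, List.mem_sublists.mpr List.filter_sublist, rfl⟩
    · refine hc.trans (sum_set_congr ?_ ?_)
      · intro x hx
        refine List.mem_filter.mpr ⟨List.mem_dedup.mpr (hl x hx), by simp [hx]⟩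
      · intro x hx
        have := (List.mem_filter.mp hx).2
        simpa using this
  · refine ⟨(EL e).toFinset, ?_, ?_⟩
    · obtain ⟨l, hl, hc⟩ := hee
      exact ⟨l, fun x hx => List.mem_toFinset.mpr (hl x hx), hc⟩
    · intro f hf g hg
      have hf' : coversL (EL e) f := coversL_mem (List.mem_toFinset.mp hf)
      obtain ⟨l, hl, hc⟩ := dleq_coversL e hg hf'
      exact ⟨l, fun x hx => List.mem_toFinset.mpr (hl x hx), hc⟩
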